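/- Let π_θ be a compatible family of PDFs on ℝ with CDF Π_θ and Π_θ(α) > 0. Then E_u[1_{u ≤ α} (∇_θ log π_θ(u))²] ≥ Π_θ(α) (∇_θ log Π_θ(α))², i.e., the second moment of the truncated score dominates the second moment obtained by replacing the score with the constant ∇_θ log Π_θ(α). -/

import Mathlib

open MeasureTheory Set

/-- the second moment of the truncated score dominates the second
moment obtained by replacing the score with the constant `∇_θ log Π_θ(α)`:
`E_u[1_{u ≤ α} (∇_θ log p_θ(u))²] ≥ Π_θ(α) · (∇_θ log Π_θ(α))²`. -/
theorem capg_second_moment_lower_tail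
    (p : ℝ → ℝ → ℝ) (p' ψ : ℝ → ℝ) (θ α cA : ℝ)
    (hpdf : ∀ t, ∫ u, p t u = 1) (hnn : ∀ t u, 0 ≤ p t u)
    (hp' : ∀ u, HasDerivAt (fun t => p t u) (p' u) θ)
    (hψ : ∀ u, HasDerivAt (fun t => Real.log (p t u)) (ψ u) θ)
    (hswap : HasDerivAt (fun t => ∫ u in Iic α, p t u) (∫ u in Iic α, p' u) θ)
    (hpos : 0 < ∫ u in Iic α, p θ u)
    (hcA : HasDerivAt (fun t => Real.log (∫ u in Iic α, p t u)) cA θ)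
    (hint : IntegrableOn (fun u => (ψ u)^2 * p θ u) (Iic α))
    (hint1 : IntegrableOn (fun u => ψ u * p θ u) (Iic α)) :
    (∫ u in Iic α, p θ u) * cA^2 ≤ ∫ u in Iic α, (ψ u)^2 * p θ u := by
  -- p θ is integrable
  have hIntp : Integrable (p θ) := by
    by_contra h
    have h1 := hpdf θ
    rw [integral_undef h] at h1
    exact one_ne_zero h1.symm
  have hIntpOn : IntegrableOn (p θ) (Iic α) := hIntp.integrableOn
  -- pointwise: p' u = ψ u * p θ u
  have hkey : ∀ u, p' u = ψ u * p θ u := by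
    intro u
    by_cases h : p θ u = 0
    · have hmin : IsLocalMin (fun t => p t u) θ := by
        unfold IsLocalMin IsMinFilter
        filter_upwards with t
        simp [h, hnn t u]
      have := hmin.hasDerivAt_eq_zero (hp' u)
      simp [this, h]
    · have h2 : HasDerivAt (fun t => Real.log (p t u)) (p' u / p θ u) θ :=
        (hp' u).log h
      have := (hψ u).unique h2
      rw [this, div_mul_cancel₀ _ h]
  -- cA = (∫ p') / (∫ p θ)
  have hcA' : HasDerivAt (fun t => Real.log (∫ u in Iic α, p t u))
      ((∫ u in Iic α, p' u) / (∫ u in Iic α, p θ u)) θ := hswap.log hpos.ne'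
  have hcAeq : cA = (∫ u in Iic α, p' u) / (∫ u in Iic α, p θ u) :=
    hcA.unique hcA'
  have hmean : ∫ u in Iic α, ψ u * p θ u = cA * ∫ u in Iic α, p θ u := by
    have : ∫ u in Iic α, ψ u * p θ u = ∫ u in Iic α, p' u := by
      apply integral_congr_ae
      filter_upwards with u
      exact (hkey u).symm
    rw [this, hcAeq]
    field_simp
  -- variance is nonneg
  have hvar : 0 ≤ ∫ u in Iic α, (ψ u - cA)^2 * p θ u :=
    integral_nonneg fun u => mul_nonneg (sq_nonneg _) (hnn θ u)
  have hexp : ∫ u in Iic α, (ψ u - cA)^2 * p θ u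
      = (∫ u in Iic α, (ψ u)^2 * p θ u) - 2 * cA * (∫ u in Iic α, ψ u * p θ u)
        + cA^2 * (∫ u in Iic α, p θ u) := by
    have h1 : ∀ u, (ψ u - cA)^2 * p θ u
        = (ψ u)^2 * p θ u - 2 * cA * (ψ u * p θ u) + cA^2 * p θ u := by
      intro u; ring
    rw [integral_congr_ae (Filter.Eventually.of_forall h1)]
    have hs : IntegrableOn (fun u => ψ u ^ 2 * p θ u - 2 * cA * (ψ u * p θ u)) (Iic α) :=
      hint.sub (hint1.const_mul _)
    rw [integral_add hs (hIntpOn.const_mul _),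
      integral_sub hint (hint1.const_mul _), integral_const_mul, integral_const_mul]
  rw [hexp, hmean] at hvar
  nlinarith [hvar]
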